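/- Continuity of composition in TL²: Let μ_n, μ be Borel probability measures on ℝ^d with finite second moments, F_n ∈ L²(μ_n; ℝ^k), F ∈ L²(μ; ℝ^k), and set μ̃_n = (F_n)_♯ μ_n, μ̃ = F_♯ μ. Let f̃_n ∈ L²(μ̃_n), f̃ ∈ L²(μ̃). If (μ_n, F_n) → (μ, F) in TL² and (μ̃_n, f̃_n) → (μ̃, f̃) in TL², then (μ_n, f̃_n ∘ F_n) → (μ, f̃ ∘ F) in TL². -/

import Mathlib

open MeasureTheory Filter

/-- The `TL²` distance between `(μ, f)` and `(θ, g)` for functions with values in a metric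
space `F`. -/
noncomputable def dTL2 {d : ℕ} {F : Type*} [PseudoMetricSpace F]
    (μ θ : Measure (EuclideanSpace ℝ (Fin d)))
    (f g : EuclideanSpace ℝ (Fin d) → F) : ℝ :=
  sInf { r : ℝ | ∃ π : Measure (EuclideanSpace ℝ (Fin d) × EuclideanSpace ℝ (Fin d)),
      π.fst = μ ∧ π.snd = θ ∧
      r = Real.sqrt (∫ p, dist p.1 p.2 ^ 2 + dist (f p.1) (g p.2) ^ 2 ∂π) }

/-- The `TL²` distance for pairs of measures on `ℝ^k` with real-valued functions. -/
noncomputable def dTL2' {k : ℕ} (μ θ : Measure (EuclideanSpace ℝ (Fin k)))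
    (f g : EuclideanSpace ℝ (Fin k) → ℝ) : ℝ :=
  sInf { r : ℝ | ∃ π : Measure (EuclideanSpace ℝ (Fin k) × EuclideanSpace ℝ (Fin k)),
      π.fst = μ ∧ π.snd = θ ∧
      r = Real.sqrt (∫ p, dist p.1 p.2 ^ 2 + dist (f p.1) (g p.2) ^ 2 ∂π) }

section helpers
variable {X : Type*} [MeasurableSpace X]

lemma integrable_dist_sq {E : Type*} [NormedAddCommGroup E] {π : Measure X} {u v : X → E}
    (hu : MemLp u 2 π) (hv : MemLp v 2 π) :
    Integrable (fun p => dist (u p) (v p) ^ 2) π := by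
  have h := (hu.sub hv).integrable_norm_rpow two_ne_zero ENNReal.ofNat_ne_top
  have he : (fun p => dist (u p) (v p) ^ 2)
      = fun p => ‖(u - v) p‖ ^ (ENNReal.toReal 2) := by
    funext p
    rw [Pi.sub_apply, dist_eq_norm,
      (show ENNReal.toReal 2 = ((2 : ℕ) : ℝ) by norm_num), Real.rpow_natCast]
  rw [he]
  exact h

lemma integral_sq_dist_triangle3 {Y : Type*} [PseudoMetricSpace Y] (π : Measure X)
    (a b c e : X → Y)
    (h1 : Integrable (fun p => dist (a p) (b p) ^ 2) π)
    (h2 : Integrable (fun p => dist (b p) (c p) ^ 2) π)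
    (h3 : Integrable (fun p => dist (c p) (e p) ^ 2) π) :
    ∫ p, dist (a p) (e p) ^ 2 ∂π ≤
      3 * ∫ p, dist (a p) (b p) ^ 2 ∂π + 3 * ∫ p, dist (b p) (c p) ^ 2 ∂π
        + 3 * ∫ p, dist (c p) (e p) ^ 2 ∂π := by
  have key : ∀ p, dist (a p) (e p) ^ 2 ≤
      3 * dist (a p) (b p) ^ 2 + 3 * dist (b p) (c p) ^ 2 + 3 * dist (c p) (e p) ^ 2 := by
    intro p
    have h := dist_triangle4 (a p) (b p) (c p) (e p)
    nlinarith [sq_nonneg (dist (a p) (b p) - dist (b p) (c p)),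
      sq_nonneg (dist (b p) (c p) - dist (c p) (e p)),
      sq_nonneg (dist (a p) (b p) - dist (c p) (e p)),
      dist_nonneg (x := a p) (y := e p),
      dist_nonneg (x := a p) (y := b p), dist_nonneg (x := b p) (y := c p),
      dist_nonneg (x := c p) (y := e p)]
  have i1 : Integrable (fun p => 3 * dist (a p) (b p) ^ 2) π := h1.const_mul 3
  have i2 : Integrable (fun p => 3 * dist (b p) (c p) ^ 2) π := h2.const_mul 3
  have i3 : Integrable (fun p => 3 * dist (c p) (e p) ^ 2) π := h3.const_mul 3
  have i12 : Integrable (fun p => 3 * dist (a p) (b p) ^ 2 + 3 * dist (b p) (c p) ^ 2) π :=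
    i1.add i2
  have hint : Integrable (fun p => 3 * dist (a p) (b p) ^ 2 + 3 * dist (b p) (c p) ^ 2
      + 3 * dist (c p) (e p) ^ 2) π := i12.add i3
  calc ∫ p, dist (a p) (e p) ^ 2 ∂π
      ≤ ∫ p, (3 * dist (a p) (b p) ^ 2 + 3 * dist (b p) (c p) ^ 2
          + 3 * dist (c p) (e p) ^ 2) ∂π := by
        refine integral_mono_of_nonneg ?_ hint (Filter.Eventually.of_forall key)
        exact Filter.Eventually.of_forall fun p => by positivity
    _ = 3 * ∫ p, dist (a p) (b p) ^ 2 ∂π + 3 * ∫ p, dist (b p) (c p) ^ 2 ∂π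
        + 3 * ∫ p, dist (c p) (e p) ^ 2 ∂π := by
        rw [integral_add i12 i3, integral_add i1 i2,
          integral_const_mul, integral_const_mul, integral_const_mul]

end helpers

lemma unif_sq_bound {X : Type*} [MeasurableSpace X] {E : Type*} [MeasurableSpace E]
    [MetricSpace E] [BorelSpace E] [SecondCountableTopology E]
    (π : Measure X) [IsProbabilityMeasure π]
    (u v : X → E) (hu : Measurable u) (hv : Measurable v)
    (g : E → ℝ)
    (M : ℝ) (hM : ∀ x, |g x| ≤ M)
    (δ ε' : ℝ) (hδ : 0 < δ) (hε' : 0 ≤ ε')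
    (hgu : ∀ a b : E, dist a b < δ → dist (g a) (g b) < ε')
    (hint : Integrable (fun p => dist (u p) (v p) ^ 2) π) :
    ∫ p, dist (g (u p)) (g (v p)) ^ 2 ∂π ≤
      ε' ^ 2 + (2 * M) ^ 2 / δ ^ 2 * ∫ p, dist (u p) (v p) ^ 2 ∂π := by
  set A : Set X := {p | δ ≤ dist (u p) (v p)} with hA
  have hAm : MeasurableSet A := measurableSet_le measurable_const (hu.dist hv)
  -- pointwise bound
  have key : ∀ p, dist (g (u p)) (g (v p)) ^ 2 ≤
      ε' ^ 2 + A.indicator (fun _ => (2 * M) ^ 2) p := by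
    intro p
    by_cases hp : p ∈ A
    · rw [Set.indicator_of_mem hp]
      have h1 : dist (g (u p)) (g (v p)) ≤ 2 * M := by
        have h2 := abs_le.mp (hM (u p))
        have h3 := abs_le.mp (hM (v p))
        rw [Real.dist_eq, abs_le]
        constructor <;> [linarith; linarith]
      nlinarith [dist_nonneg (x := g (u p)) (y := g (v p)), sq_nonneg ε']
    · rw [Set.indicator_of_notMem hp]
      have h1 : dist (u p) (v p) < δ := by simpa [hA] using hp
      have h2 := hgu _ _ h1
      simp only [add_zero]
      exact pow_le_pow_left₀ dist_nonneg h2.le 2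
  -- Chebyshev
  have cheb : (π A).toReal ≤ (∫ p, dist (u p) (v p) ^ 2 ∂π) / δ ^ 2 := by
    have hsub : A ⊆ {p | δ ^ 2 ≤ dist (u p) (v p) ^ 2} := by
      intro p hp
      exact pow_le_pow_left₀ hδ.le hp 2
    have h := mul_meas_ge_le_integral_of_nonneg
      (f := fun p => dist (u p) (v p) ^ 2)
      (Filter.Eventually.of_forall fun p => by positivity) hint (δ ^ 2)
    have hmono : π A ≤ π {p | δ ^ 2 ≤ dist (u p) (v p) ^ 2} := measure_mono hsub
    have hfin : π {p | δ ^ 2 ≤ dist (u p) (v p) ^ 2} ≠ ⊤ := measure_ne_top _ _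
    have htr : (π A).toReal ≤ (π {p | δ ^ 2 ≤ dist (u p) (v p) ^ 2}).toReal :=
      ENNReal.toReal_mono hfin hmono
    rw [le_div_iff₀ (by positivity)]
    calc (π A).toReal * δ ^ 2 ≤ (π {p | δ ^ 2 ≤ dist (u p) (v p) ^ 2}).toReal * δ ^ 2 := by
          nlinarith [sq_nonneg δ]
      _ = δ ^ 2 * (π {p | δ ^ 2 ≤ dist (u p) (v p) ^ 2}).toReal := by ring
      _ ≤ ∫ p, dist (u p) (v p) ^ 2 ∂π := h
  -- integrate the pointwise bound
  have iInd : Integrable (A.indicator (fun _ => (2 * M) ^ 2)) π :=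
    (integrable_const _).indicator hAm
  have iRHS : Integrable (fun p => ε' ^ 2 + A.indicator (fun _ => (2 * M) ^ 2) p) π :=
    (integrable_const _).add iInd
  calc ∫ p, dist (g (u p)) (g (v p)) ^ 2 ∂π
      ≤ ∫ p, (ε' ^ 2 + A.indicator (fun _ => (2 * M) ^ 2) p) ∂π :=
        integral_mono_of_nonneg (Filter.Eventually.of_forall fun p => by positivity) iRHS
          (Filter.Eventually.of_forall key)
    _ = ε' ^ 2 + (2 * M) ^ 2 * (π A).toReal := by
        rw [integral_add (integrable_const _) iInd, integral_const]
        simp [integral_indicator_const _ hAm, mul_comm, measureReal_def]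
    _ ≤ ε' ^ 2 + (2 * M) ^ 2 / δ ^ 2 * ∫ p, dist (u p) (v p) ^ 2 ∂π := by
        have h4 : (0:ℝ) ≤ (2 * M) ^ 2 := sq_nonneg _
        have h5 := mul_le_mul_of_nonneg_left cheb h4
        have e : (2 * M) ^ 2 / δ ^ 2 * ∫ p, dist (u p) (v p) ^ 2 ∂π
            = (2 * M) ^ 2 * ((∫ p, dist (u p) (v p) ^ 2 ∂π) / δ ^ 2) := by ring
        rw [e]
        linarith
open MeasureTheory Filter

section dtl2
variable {d : ℕ} {Y : Type*} [PseudoMetricSpace Y]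
  {μ θ : Measure (EuclideanSpace ℝ (Fin d))} {f g : EuclideanSpace ℝ (Fin d) → Y}

lemma dTL2_bddBelow : BddBelow { r : ℝ | ∃ π : Measure (EuclideanSpace ℝ (Fin d) × EuclideanSpace ℝ (Fin d)),
      π.fst = μ ∧ π.snd = θ ∧
      r = Real.sqrt (∫ p, dist p.1 p.2 ^ 2 + dist (f p.1) (g p.2) ^ 2 ∂π) } := by
  refine ⟨0, fun r hr => ?_⟩
  obtain ⟨π, -, -, rfl⟩ := hr
  exact Real.sqrt_nonneg _

lemma dTL2_nonneg : 0 ≤ dTL2 μ θ f g := by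
  refine Real.sInf_nonneg fun r hr => ?_
  obtain ⟨π, -, -, rfl⟩ := hr
  exact Real.sqrt_nonneg _

lemma dTL2_le_sqrt {π : Measure (EuclideanSpace ℝ (Fin d) × EuclideanSpace ℝ (Fin d))}
    (h1 : π.fst = μ) (h2 : π.snd = θ) :
    dTL2 μ θ f g ≤ Real.sqrt (∫ p, dist p.1 p.2 ^ 2 + dist (f p.1) (g p.2) ^ 2 ∂π) :=
  csInf_le dTL2_bddBelow ⟨π, h1, h2, rfl⟩

lemma dTL2_exists_coupling [IsProbabilityMeasure μ] [IsProbabilityMeasure θ] {c : ℝ}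
    (h : dTL2 μ θ f g < c) :
    ∃ π : Measure (EuclideanSpace ℝ (Fin d) × EuclideanSpace ℝ (Fin d)),
      π.fst = μ ∧ π.snd = θ ∧
      Real.sqrt (∫ p, dist p.1 p.2 ^ 2 + dist (f p.1) (g p.2) ^ 2 ∂π) < c := by
  have hne : { r : ℝ | ∃ π : Measure (EuclideanSpace ℝ (Fin d) × EuclideanSpace ℝ (Fin d)),
      π.fst = μ ∧ π.snd = θ ∧
      r = Real.sqrt (∫ p, dist p.1 p.2 ^ 2 + dist (f p.1) (g p.2) ^ 2 ∂π) }.Nonempty :=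
    ⟨_, μ.prod θ, Measure.fst_prod, Measure.snd_prod, rfl⟩
  obtain ⟨r, hrmem, hrc⟩ := (csInf_lt_iff dTL2_bddBelow hne).mp h
  obtain ⟨π, hπ1, hπ2, rfl⟩ := hrmem
  exact ⟨π, hπ1, hπ2, hrc⟩

end dtl2

lemma main_estimate {d k : ℕ}
    (μn μ : Measure (EuclideanSpace ℝ (Fin d)))
    [IsProbabilityMeasure μn] [IsProbabilityMeasure μ]
    (h2n : Integrable (fun x => ‖x‖ ^ 2) μn) (h2 : Integrable (fun x => ‖x‖ ^ 2) μ)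
    (Fn F : EuclideanSpace ℝ (Fin d) → EuclideanSpace ℝ (Fin k))
    (hFnm : Measurable Fn) (hFm : Measurable F)
    (hFn : MemLp Fn 2 μn) (hF : MemLp F 2 μ)
    (ftn ft g : EuclideanSpace ℝ (Fin k) → ℝ)
    (hftn : MemLp ftn 2 (Measure.map Fn μn)) (hft : MemLp ft 2 (Measure.map F μ))
    (hgcont : Continuous g) (M : ℝ) (hM : ∀ x, |g x| ≤ M)
    (δ ε' ε₁ : ℝ) (hδ : 0 < δ) (hε' : 0 < ε') (hε₁ : 0 < ε₁) (hε₁' : ε₁ ≤ ε')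
    (hgu : ∀ a b, dist a b < δ → dist (g a) (g b) < ε')
    (hkey2 : (2 * M) ^ 2 / δ ^ 2 * ε₁ ^ 2 ≤ ε' ^ 2)
    (hgL2 : ∫ x, dist (ft x) (g x) ^ 2 ∂(Measure.map F μ) ≤ ε' ^ 2)
    (hd1 : dTL2 μn μ Fn F < ε₁)
    (hd2 : dTL2 (Measure.map Fn μn) (Measure.map F μ) ftn ft < ε₁) :
    dTL2 μn μ (fun x => ftn (Fn x)) (fun x => ft (F x)) ≤ Real.sqrt (46 * ε' ^ 2) := by
  haveI : IsProbabilityMeasure (Measure.map Fn μn) := Measure.isProbabilityMeasure_map hFnm.aemeasurable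
  haveI : IsProbabilityMeasure (Measure.map F μ) := Measure.isProbabilityMeasure_map hFm.aemeasurable
  obtain ⟨π, hπ1, hπ2, hπr⟩ := dTL2_exists_coupling hd1
  obtain ⟨γ, hγ1, hγ2, hγr⟩ := dTL2_exists_coupling hd2
  haveI : IsProbabilityMeasure π := ⟨by rw [← Measure.fst_univ, hπ1]; exact measure_univ⟩
  haveI : IsProbabilityMeasure γ := ⟨by rw [← Measure.fst_univ, hγ1]; exact measure_univ⟩
  -- marginal identities as map statements
  have hmπ1 : Measure.map Prod.fst π = μn := hπ1
  have hmπ2 : Measure.map Prod.snd π = μ := hπ2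
  have hmγ1 : Measure.map Prod.fst γ = Measure.map Fn μn := hγ1
  have hmγ2 : Measure.map Prod.snd γ = Measure.map F μ := hγ2
  have hmπF1 : Measure.map (fun p : EuclideanSpace ℝ (Fin d) × EuclideanSpace ℝ (Fin d) => Fn p.1) π
      = Measure.map Fn μn := by
    rw [← hmπ1, Measure.map_map hFnm measurable_fst]; rfl
  have hmπF2 : Measure.map (fun p : EuclideanSpace ℝ (Fin d) × EuclideanSpace ℝ (Fin d) => F p.2) π
      = Measure.map F μ := by
    rw [← hmπ2, Measure.map_map hFm measurable_snd]; rfl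
  -- Memℒp of relevant functions over π
  have hP1 : MemLp (fun p : EuclideanSpace ℝ (Fin d) × EuclideanSpace ℝ (Fin d) => p.1) 2 π := by
    have hid : MemLp (id : EuclideanSpace ℝ (Fin d) → EuclideanSpace ℝ (Fin d)) 2 μn :=
      (memLp_two_iff_integrable_sq_norm aestronglyMeasurable_id).2 (by simpa using h2n)
    have := (memLp_map_measure_iff aestronglyMeasurable_id measurable_fst.aemeasurable).1
      (by rw [hmπ1]; exact hid)
    simpa [Function.comp] using this
  have hP2 : MemLp (fun p : EuclideanSpace ℝ (Fin d) × EuclideanSpace ℝ (Fin d) => p.2) 2 π := by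
    have hid : MemLp (id : EuclideanSpace ℝ (Fin d) → EuclideanSpace ℝ (Fin d)) 2 μ :=
      (memLp_two_iff_integrable_sq_norm aestronglyMeasurable_id).2 (by simpa using h2)
    have := (memLp_map_measure_iff aestronglyMeasurable_id measurable_snd.aemeasurable).1
      (by rw [hmπ2]; exact hid)
    simpa [Function.comp] using this
  have hPF1 : MemLp (fun p : EuclideanSpace ℝ (Fin d) × EuclideanSpace ℝ (Fin d) => Fn p.1) 2 π := by
    have := (memLp_map_measure_iff hFnm.aestronglyMeasurable measurable_fst.aemeasurable).1
      (by rw [hmπ1]; exact hFn)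
    simpa [Function.comp_def] using this
  have hPF2 : MemLp (fun p : EuclideanSpace ℝ (Fin d) × EuclideanSpace ℝ (Fin d) => F p.2) 2 π := by
    have := (memLp_map_measure_iff hFm.aestronglyMeasurable measurable_snd.aemeasurable).1
      (by rw [hmπ2]; exact hF)
    simpa [Function.comp_def] using this
  have hPfts : MemLp (fun p : EuclideanSpace ℝ (Fin d) × EuclideanSpace ℝ (Fin d) =>
      ftn (Fn p.1)) 2 π := by
    have hasm : AEStronglyMeasurable ftn
        (Measure.map (fun p : EuclideanSpace ℝ (Fin d) × EuclideanSpace ℝ (Fin d) => Fn p.1) π) := by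
      rw [hmπF1]; exact hftn.aestronglyMeasurable
    have := (memLp_map_measure_iff hasm ((hFnm.comp measurable_fst).aemeasurable)).1
      (by rw [hmπF1]; exact hftn)
    simpa [Function.comp_def] using this
  have hPft : MemLp (fun p : EuclideanSpace ℝ (Fin d) × EuclideanSpace ℝ (Fin d) =>
      ft (F p.2)) 2 π := by
    have hasm : AEStronglyMeasurable ft
        (Measure.map (fun p : EuclideanSpace ℝ (Fin d) × EuclideanSpace ℝ (Fin d) => F p.2) π) := by
      rw [hmπF2]; exact hft.aestronglyMeasurable
    have := (memLp_map_measure_iff hasm ((hFm.comp measurable_snd).aemeasurable)).1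
      (by rw [hmπF2]; exact hft)
    simpa [Function.comp_def] using this
  have hPg1 : MemLp (fun p : EuclideanSpace ℝ (Fin d) × EuclideanSpace ℝ (Fin d) =>
      g (Fn p.1)) 2 π :=
    MemLp.of_bound ((hgcont.measurable.comp (hFnm.comp measurable_fst)).aestronglyMeasurable) M
      (Filter.Eventually.of_forall fun p => by simpa [Real.norm_eq_abs] using hM (Fn p.1))
  have hPg2 : MemLp (fun p : EuclideanSpace ℝ (Fin d) × EuclideanSpace ℝ (Fin d) =>
      g (F p.2)) 2 π :=
    MemLp.of_bound ((hgcont.measurable.comp (hFm.comp measurable_snd)).aestronglyMeasurable) M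
      (Filter.Eventually.of_forall fun p => by simpa [Real.norm_eq_abs] using hM (F p.2))
  -- Memℒp over γ
  have hG1 : MemLp (fun p : EuclideanSpace ℝ (Fin k) × EuclideanSpace ℝ (Fin k) => p.1) 2 γ := by
    have hid : MemLp (id : EuclideanSpace ℝ (Fin k) → EuclideanSpace ℝ (Fin k)) 2
        (Measure.map Fn μn) := by
      refine (memLp_map_measure_iff aestronglyMeasurable_id hFnm.aemeasurable).2 ?_
      simpa [Function.comp] using hFn
    have := (memLp_map_measure_iff aestronglyMeasurable_id measurable_fst.aemeasurable).1
      (by rw [hmγ1]; exact hid)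
    simpa [Function.comp] using this
  have hG2 : MemLp (fun p : EuclideanSpace ℝ (Fin k) × EuclideanSpace ℝ (Fin k) => p.2) 2 γ := by
    have hid : MemLp (id : EuclideanSpace ℝ (Fin k) → EuclideanSpace ℝ (Fin k)) 2
        (Measure.map F μ) := by
      refine (memLp_map_measure_iff aestronglyMeasurable_id hFm.aemeasurable).2 ?_
      simpa [Function.comp] using hF
    have := (memLp_map_measure_iff aestronglyMeasurable_id measurable_snd.aemeasurable).1
      (by rw [hmγ2]; exact hid)
    simpa [Function.comp] using this
  have hGftn : MemLp (fun p : EuclideanSpace ℝ (Fin k) × EuclideanSpace ℝ (Fin k) =>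
      ftn p.1) 2 γ := by
    have hasm : AEStronglyMeasurable ftn (Measure.map Prod.fst γ) := by
      rw [hmγ1]; exact hftn.aestronglyMeasurable
    have := (memLp_map_measure_iff hasm measurable_fst.aemeasurable).1 (by rw [hmγ1]; exact hftn)
    simpa [Function.comp_def] using this
  have hGft : MemLp (fun p : EuclideanSpace ℝ (Fin k) × EuclideanSpace ℝ (Fin k) =>
      ft p.2) 2 γ := by
    have hasm : AEStronglyMeasurable ft (Measure.map Prod.snd γ) := by
      rw [hmγ2]; exact hft.aestronglyMeasurable
    have := (memLp_map_measure_iff hasm measurable_snd.aemeasurable).1 (by rw [hmγ2]; exact hft)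
    simpa [Function.comp_def] using this
  have hGg1 : MemLp (fun p : EuclideanSpace ℝ (Fin k) × EuclideanSpace ℝ (Fin k) =>
      g p.1) 2 γ :=
    MemLp.of_bound ((hgcont.measurable.comp measurable_fst).aestronglyMeasurable) M
      (Filter.Eventually.of_forall fun p => by simpa [Real.norm_eq_abs] using hM p.1)
  have hGg2 : MemLp (fun p : EuclideanSpace ℝ (Fin k) × EuclideanSpace ℝ (Fin k) =>
      g p.2) 2 γ :=
    MemLp.of_bound ((hgcont.measurable.comp measurable_snd).aestronglyMeasurable) M
      (Filter.Eventually.of_forall fun p => by simpa [Real.norm_eq_abs] using hM p.2)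
  -- integrabilities
  have iπdist := integrable_dist_sq hP1 hP2
  have iπF := integrable_dist_sq hPF1 hPF2
  have iπ1 := integrable_dist_sq hPfts hPg1
  have iπ2 := integrable_dist_sq hPg1 hPg2
  have iπ3 := integrable_dist_sq hPg2 hPft
  have iπh := integrable_dist_sq hPfts hPft
  have iγdist := integrable_dist_sq hG1 hG2
  have iγdist' := integrable_dist_sq hG2 hG1
  have iγB := integrable_dist_sq hGftn hGft
  have iγ2 := integrable_dist_sq hGft hGg2
  have iγ3 := integrable_dist_sq hGg2 hGg1
  -- split the coupling bounds
  have hπs : ∫ p, dist p.1 p.2 ^ 2 ∂π + ∫ p, dist (Fn p.1) (F p.2) ^ 2 ∂π < ε₁ ^ 2 := by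
    have := (Real.sqrt_lt' hε₁).1 hπr
    rwa [integral_add iπdist iπF] at this
  have hSA0 : 0 ≤ ∫ p, dist p.1 p.2 ^ 2 ∂π :=
    integral_nonneg fun p => by positivity
  have hSB0 : 0 ≤ ∫ p, dist (Fn p.1) (F p.2) ^ 2 ∂π :=
    integral_nonneg fun p => by positivity
  have hSA : ∫ p, dist p.1 p.2 ^ 2 ∂π < ε₁ ^ 2 := by linarith
  have hSB : ∫ p, dist (Fn p.1) (F p.2) ^ 2 ∂π < ε₁ ^ 2 := by linarith
  have hγs : ∫ p, dist p.1 p.2 ^ 2 ∂γ + ∫ p, dist (ftn p.1) (ft p.2) ^ 2 ∂γ < ε₁ ^ 2 := by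
    have := (Real.sqrt_lt' hε₁).1 hγr
    rwa [integral_add iγdist iγB] at this
  have hTA0 : 0 ≤ ∫ p, dist p.1 p.2 ^ 2 ∂γ := integral_nonneg fun p => by positivity
  have hTB0 : 0 ≤ ∫ p, dist (ftn p.1) (ft p.2) ^ 2 ∂γ := integral_nonneg fun p => by positivity
  have hTA : ∫ p, dist p.1 p.2 ^ 2 ∂γ < ε₁ ^ 2 := by linarith
  have hTB : ∫ p, dist (ftn p.1) (ft p.2) ^ 2 ∂γ < ε₁ ^ 2 := by linarith
  -- transfer hgL2 to γ and π
  have hASMftg : AEStronglyMeasurable (fun x => dist (ft x) (g x) ^ 2) (Measure.map F μ) :=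
    (hft.aestronglyMeasurable.dist hgcont.aestronglyMeasurable).pow _
  have Eγ2 : ∫ p, dist (ft p.2) (g p.2) ^ 2 ∂γ ≤ ε' ^ 2 := by
    have hasm' : AEStronglyMeasurable (fun x => dist (ft x) (g x) ^ 2)
        (Measure.map Prod.snd γ) := by rw [hmγ2]; exact hASMftg
    calc ∫ p, dist (ft p.2) (g p.2) ^ 2 ∂γ
        = ∫ y, dist (ft y) (g y) ^ 2 ∂(Measure.map Prod.snd γ) :=
          (integral_map measurable_snd.aemeasurable hasm').symm
      _ = ∫ y, dist (ft y) (g y) ^ 2 ∂(Measure.map F μ) := by rw [hmγ2]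
      _ ≤ ε' ^ 2 := hgL2
  have Eπ3 : ∫ p, dist (g (F p.2)) (ft (F p.2)) ^ 2 ∂π ≤ ε' ^ 2 := by
    have hasm : AEStronglyMeasurable (fun x => dist (g x) (ft x) ^ 2) (Measure.map F μ) :=
      (hgcont.aestronglyMeasurable.dist hft.aestronglyMeasurable).pow _
    have hasm' : AEStronglyMeasurable (fun x => dist (g x) (ft x) ^ 2)
        (Measure.map (fun p : EuclideanSpace ℝ (Fin d) × EuclideanSpace ℝ (Fin d) => F p.2) π) := by
      rw [hmπF2]; exact hasm
    have h2 : ∫ x, dist (g x) (ft x) ^ 2 ∂(Measure.map F μ)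
        = ∫ x, dist (ft x) (g x) ^ 2 ∂(Measure.map F μ) := by
      refine integral_congr_ae (Filter.Eventually.of_forall fun x => ?_)
      simp [dist_comm]
    calc ∫ p, dist (g (F p.2)) (ft (F p.2)) ^ 2 ∂π
        = ∫ x, dist (g x) (ft x) ^ 2
            ∂(Measure.map (fun p : EuclideanSpace ℝ (Fin d) × EuclideanSpace ℝ (Fin d) => F p.2) π) :=
          (integral_map ((hFm.comp measurable_snd).aemeasurable) hasm').symm
      _ = ∫ x, dist (g x) (ft x) ^ 2 ∂(Measure.map F μ) := by rw [hmπF2]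
      _ = ∫ x, dist (ft x) (g x) ^ 2 ∂(Measure.map F μ) := h2
      _ ≤ ε' ^ 2 := hgL2
  -- the g-oscillation bounds
  have C0 : (0:ℝ) ≤ (2 * M) ^ 2 / δ ^ 2 := by positivity
  have Egγ : ∫ p, dist (g p.2) (g p.1) ^ 2 ∂γ ≤ 2 * ε' ^ 2 := by
    have h := unif_sq_bound γ Prod.snd Prod.fst measurable_snd measurable_fst g M hM δ ε'
      hδ hε'.le hgu iγdist'
    have hTA' : ∫ p, dist p.2 p.1 ^ 2 ∂γ = ∫ p, dist p.1 p.2 ^ 2 ∂γ :=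
      integral_congr_ae (Filter.Eventually.of_forall fun p => by simp [dist_comm])
    rw [hTA'] at h
    have h2 : (2 * M) ^ 2 / δ ^ 2 * ∫ p, dist p.1 p.2 ^ 2 ∂γ ≤ (2 * M) ^ 2 / δ ^ 2 * ε₁ ^ 2 :=
      mul_le_mul_of_nonneg_left hTA.le C0
    linarith
  have Egπ : ∫ p, dist (g (Fn p.1)) (g (F p.2)) ^ 2 ∂π ≤ 2 * ε' ^ 2 := by
    have h := unif_sq_bound π (fun p => Fn p.1) (fun p => F p.2)
      (hFnm.comp measurable_fst) (hFm.comp measurable_snd) g M hM δ ε' hδ hε'.le hgu iπF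
    have h2 : (2 * M) ^ 2 / δ ^ 2 * ∫ p, dist (Fn p.1) (F p.2) ^ 2 ∂π
        ≤ (2 * M) ^ 2 / δ ^ 2 * ε₁ ^ 2 := mul_le_mul_of_nonneg_left hSB.le C0
    linarith
  -- estimate of ∫ dist(ftn, g)² over μ̃n via γ
  have EftsGam : ∫ p, dist (ftn p.1) (g p.1) ^ 2 ∂γ ≤ 12 * ε' ^ 2 := by
    have h := integral_sq_dist_triangle3 γ (fun p => ftn p.1) (fun p => ft p.2)
      (fun p => g p.2) (fun p => g p.1) iγB iγ2 iγ3
    have hε₁sq : ε₁ ^ 2 ≤ ε' ^ 2 := by nlinarith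
    linarith
  -- transfer to π
  have hASMftng : AEStronglyMeasurable (fun x => dist (ftn x) (g x) ^ 2) (Measure.map Fn μn) :=
    (hftn.aestronglyMeasurable.dist hgcont.aestronglyMeasurable).pow _
  have EftsPi : ∫ p, dist (ftn (Fn p.1)) (g (Fn p.1)) ^ 2 ∂π ≤ 12 * ε' ^ 2 := by
    have hasm1 : AEStronglyMeasurable (fun x => dist (ftn x) (g x) ^ 2)
        (Measure.map (fun p : EuclideanSpace ℝ (Fin d) × EuclideanSpace ℝ (Fin d) => Fn p.1) π) := by
      rw [hmπF1]; exact hASMftng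
    have hasm2 : AEStronglyMeasurable (fun x => dist (ftn x) (g x) ^ 2)
        (Measure.map Prod.fst γ) := by rw [hmγ1]; exact hASMftng
    calc ∫ p, dist (ftn (Fn p.1)) (g (Fn p.1)) ^ 2 ∂π
        = ∫ x, dist (ftn x) (g x) ^ 2
            ∂(Measure.map (fun p : EuclideanSpace ℝ (Fin d) × EuclideanSpace ℝ (Fin d) => Fn p.1) π) :=
          (integral_map ((hFnm.comp measurable_fst).aemeasurable) hasm1).symm
      _ = ∫ x, dist (ftn x) (g x) ^ 2 ∂(Measure.map Fn μn) := by rw [hmπF1]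
      _ = ∫ x, dist (ftn x) (g x) ^ 2 ∂(Measure.map Prod.fst γ) := by rw [hmγ1]
      _ = ∫ p, dist (ftn p.1) (g p.1) ^ 2 ∂γ :=
          integral_map measurable_fst.aemeasurable hasm2
      _ ≤ 12 * ε' ^ 2 := EftsGam
  -- final assembly
  have hh : ∫ p, dist (ftn (Fn p.1)) (ft (F p.2)) ^ 2 ∂π ≤ 45 * ε' ^ 2 := by
    have h := integral_sq_dist_triangle3 π (fun p => ftn (Fn p.1)) (fun p => g (Fn p.1))
      (fun p => g (F p.2)) (fun p => ft (F p.2)) iπ1 iπ2 iπ3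
    linarith
  have htot : ∫ p, dist p.1 p.2 ^ 2 + dist (ftn (Fn p.1)) (ft (F p.2)) ^ 2 ∂π ≤ 46 * ε' ^ 2 := by
    rw [integral_add iπdist iπh]
    have hε₁sq : ε₁ ^ 2 ≤ ε' ^ 2 := by nlinarith
    linarith
  calc dTL2 μn μ (fun x => ftn (Fn x)) (fun x => ft (F x))
      ≤ Real.sqrt (∫ p, dist p.1 p.2 ^ 2 + dist (ftn (Fn p.1)) (ft (F p.2)) ^ 2 ∂π) :=
        dTL2_le_sqrt hπ1 hπ2
    _ ≤ Real.sqrt (46 * ε' ^ 2) := Real.sqrt_le_sqrt htot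

lemma dTL2'_eq_dTL2 {k : ℕ} (μ θ : Measure (EuclideanSpace ℝ (Fin k)))
    (f g : EuclideanSpace ℝ (Fin k) → ℝ) : dTL2' μ θ f g = dTL2 μ θ f g := rfl

/-- Continuity of composition in `TL²`: if `(μ_n, F_n) → (μ, F)` in `TL²` and
`(F_{n♯}μ_n, f̃_n) → (F_♯μ, f̃)` in `TL²`, then `(μ_n, f̃_n ∘ F_n) → (μ, f̃ ∘ F)` in `TL²`. -/
theorem TL2_composition_continuous (d k : ℕ)
    (μ : Measure (EuclideanSpace ℝ (Fin d))) [IsProbabilityMeasure μ]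
    (h2 : Integrable (fun x => ‖x‖ ^ 2) μ)
    (μs : ℕ → Measure (EuclideanSpace ℝ (Fin d)))
    (hprob : ∀ n, IsProbabilityMeasure (μs n))
    (h2s : ∀ n, Integrable (fun x => ‖x‖ ^ 2) (μs n))
    (F : EuclideanSpace ℝ (Fin d) → EuclideanSpace ℝ (Fin k))
    (Fs : ℕ → EuclideanSpace ℝ (Fin d) → EuclideanSpace ℝ (Fin k))
    (hFm : Measurable F) (hFsm : ∀ n, Measurable (Fs n))
    (hF : MemLp F 2 μ) (hFs : ∀ n, MemLp (Fs n) 2 (μs n))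
    (ft : EuclideanSpace ℝ (Fin k) → ℝ) (fts : ℕ → EuclideanSpace ℝ (Fin k) → ℝ)
    (hft : MemLp ft 2 (Measure.map F μ))
    (hfts : ∀ n, MemLp (fts n) 2 (Measure.map (Fs n) (μs n)))
    (hFconv : Tendsto (fun n => dTL2 (μs n) μ (Fs n) F) atTop (nhds 0))
    (hftconv : Tendsto
      (fun n => dTL2' (Measure.map (Fs n) (μs n)) (Measure.map F μ) (fts n) ft)
      atTop (nhds 0)) :
    Tendsto (fun n => dTL2 (μs n) μ (fun x => fts n (Fs n x)) (fun x => ft (F x)))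
      atTop (nhds 0) := by
  haveI : IsProbabilityMeasure (Measure.map F μ) := Measure.isProbabilityMeasure_map hFm.aemeasurable
  rw [Metric.tendsto_atTop]
  intro ε hε
  set ε' : ℝ := ε / 7 with hε'def
  have hε'pos : 0 < ε' := by positivity
  -- approximation of ft by a continuous compactly supported function
  have hft2 : MemLp ft (ENNReal.ofReal (2:ℝ)) (Measure.map F μ) := by
    rw [show ENNReal.ofReal (2:ℝ) = 2 from by norm_num [ENNReal.ofReal_ofNat]]
    exact hft
  obtain ⟨g, hgsupp, hgint, hgcont, -⟩ :=
    hft2.exists_hasCompactSupport_integral_rpow_sub_le (by norm_num : (0:ℝ) < 2)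
      (show (0:ℝ) < ε' ^ 2 by positivity)
  have hgL2 : ∫ x, dist (ft x) (g x) ^ 2 ∂(Measure.map F μ) ≤ ε' ^ 2 := by
    have he : ∀ x, ‖ft x - g x‖ ^ (2:ℝ) = dist (ft x) (g x) ^ 2 := fun x => by
      rw [dist_eq_norm, (show (2:ℝ) = ((2:ℕ):ℝ) by norm_num), Real.rpow_natCast]
    simp_rw [he] at hgint
    exact hgint
  -- bound and uniform continuity of g
  obtain ⟨M, hM⟩ := hgsupp.exists_bound_of_continuous hgcont
  have hM' : ∀ x, |g x| ≤ M := fun x => by simpa [Real.norm_eq_abs] using hM x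
  have hM0 : 0 ≤ M := le_trans (norm_nonneg _) (hM 0)
  have hgu := hgsupp.uniformContinuous_of_continuous hgcont
  rw [Metric.uniformContinuous_iff] at hgu
  obtain ⟨δ, hδpos, hδ⟩ := hgu ε' hε'pos
  -- choice of ε₁
  set ε₁ : ℝ := min ε' (ε' * δ / (2 * M + 1)) with hε₁def
  have hε₁pos : 0 < ε₁ := lt_min hε'pos (by positivity)
  have hε₁le : ε₁ ≤ ε' := min_le_left _ _
  have hkey2 : (2 * M) ^ 2 / δ ^ 2 * ε₁ ^ 2 ≤ ε' ^ 2 := by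
    have h1 : ε₁ ≤ ε' * δ / (2 * M + 1) := min_le_right _ _
    have h2 : ε₁ ^ 2 ≤ (ε' * δ / (2 * M + 1)) ^ 2 := by
      apply pow_le_pow_left₀ hε₁pos.le h1
    have h3 : (2 * M) ^ 2 / δ ^ 2 * ε₁ ^ 2 ≤ (2 * M) ^ 2 / δ ^ 2 * (ε' * δ / (2 * M + 1)) ^ 2 :=
      mul_le_mul_of_nonneg_left h2 (by positivity)
    have h4 : (2 * M) ^ 2 / δ ^ 2 * (ε' * δ / (2 * M + 1)) ^ 2
        = ε' ^ 2 * ((2 * M) ^ 2 / (2 * M + 1) ^ 2) := by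
      field_simp
    have h5 : (2 * M) ^ 2 / (2 * M + 1) ^ 2 ≤ 1 := by
      rw [div_le_one (by positivity)]
      nlinarith
    nlinarith [sq_nonneg ε']
  -- eventually both distances are < ε₁
  obtain ⟨N1, hN1⟩ := (Metric.tendsto_atTop.mp hFconv) ε₁ hε₁pos
  obtain ⟨N2, hN2⟩ := (Metric.tendsto_atTop.mp hftconv) ε₁ hε₁pos
  refine ⟨max N1 N2, fun n hn => ?_⟩
  haveI := hprob n
  have hd1 : dTL2 (μs n) μ (Fs n) F < ε₁ := by
    have := hN1 n (le_trans (le_max_left _ _) hn)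
    rw [Real.dist_eq, sub_zero] at this
    exact lt_of_le_of_lt (le_abs_self _) this
  have hd2 : dTL2 (Measure.map (Fs n) (μs n)) (Measure.map F μ) (fts n) ft < ε₁ := by
    have := hN2 n (le_trans (le_max_right _ _) hn)
    rw [Real.dist_eq, sub_zero] at this
    rw [← dTL2'_eq_dTL2]
    exact lt_of_le_of_lt (le_abs_self _) this
  have hmain := main_estimate (μs n) μ (h2s n) h2 (Fs n) F (hFsm n) hFm (hFs n) hF
    (fts n) ft g (hfts n) hft hgcont M hM' δ ε' ε₁ hδpos hε'pos hε₁pos hε₁le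
    (fun a b hab => hδ hab) hkey2 hgL2 hd1 hd2
  rw [Real.dist_eq, sub_zero, abs_of_nonneg dTL2_nonneg]
  refine lt_of_le_of_lt hmain ?_
  rw [Real.sqrt_lt' hε]
  rw [hε'def]
  nlinarith [sq_nonneg ε, hε]
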